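/- arXiv:1004.3527 — 4 statements merged into one kernel-verified Lean document; each statement's English description precedes it below -/
import Mathlib

section
/- If X ~ Binomial(d, p) with d ≥ 1 and 0 < p < 1, and a is a Bernoulli(p) random variable such that X can be written as a + Y with Y ~ Binomial(d-1, p) independent of a, then E[a/(X+1)] = (1 - M)/d, where M = (1 - (1-p)^(d+1))/(p(d+1)). -/
lemma sum_pq (p q : ℝ) (h : p + q = 1) (m : ℕ) :
    ∑ k ∈ Finset.range (m+1), (m.choose k : ℝ) * p^k * q^(m-k) = 1 := by
  have := add_pow p q m
  rw [h, one_pow] at this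
  rw [this]
  exact Finset.sum_congr rfl (fun k _ => by ring)

lemma sum_kpq (p q : ℝ) (h : p + q = 1) (m : ℕ) :
    ∑ k ∈ Finset.range (m+1), (k:ℝ) * (m.choose k : ℝ) * p^k * q^(m-k) = m * p := by
  cases m with
  | zero => simp
  | succ n =>
    rw [Finset.sum_range_succ']
    have hterm : ∀ i ∈ Finset.range (n+1),
        ((i+1:ℕ):ℝ) * ((n+1).choose (i+1) : ℝ) * p^(i+1) * q^(n+1-(i+1)) =
        ((n+1:ℕ):ℝ) * p * ((n.choose i : ℝ) * p^i * q^(n-i)) := by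
      intro i _
      have hc : (n+1) * n.choose i = (n+1).choose (i+1) * (i+1) := Nat.add_one_mul_choose_eq n i
      have hc' : ((n+1:ℕ):ℝ) * (n.choose i : ℝ) = ((n+1).choose (i+1) : ℝ) * ((i+1:ℕ):ℝ) := by
        exact_mod_cast congrArg (Nat.cast (R := ℝ)) hc
      have : n+1-(i+1) = n - i := by omega
      rw [this]
      rw [pow_succ]
      linear_combination (-(p^i * p * q^(n-i))) * hc'
    calc (∑ i ∈ Finset.range (n+1), ((i+1:ℕ):ℝ) * ((n+1).choose (i+1) : ℝ) * p^(i+1) * q^(n+1-(i+1)))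
          + ((0:ℕ):ℝ) * ((n+1).choose 0 : ℝ) * p^0 * q^(n+1-0)
        = ∑ i ∈ Finset.range (n+1), ((n+1:ℕ):ℝ) * p * ((n.choose i : ℝ) * p^i * q^(n-i)) := by
          rw [Finset.sum_congr rfl hterm]; simp
      _ = ((n+1:ℕ):ℝ) * p * ∑ i ∈ Finset.range (n+1), ((n.choose i : ℝ) * p^i * q^(n-i)) := by
          rw [Finset.mul_sum]
      _ = ((n+1:ℕ):ℝ) * p := by rw [sum_pq p q h n, mul_one]

/-- If `a ~ Bernoulli(p)`, `Y ~ Binomial(d-1, p)` independent of `a`, `d ≥ 1`, and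
`X = a + Y ~ Binomial(d, p)`, then `E[a/(X+1)] = (1 - M)/d` where
`M = (1 - (1-p)^(d+1))/(p(d+1))`. The expectation is written as an explicit sum over
the joint distribution of `(a, Y)`. -/
theorem bernoulli_binomial_expectation_a_div
    (d : ℕ) (hd : 1 ≤ d) (p q M : ℝ) (hp0 : 0 < p) (hp1 : p < 1) (hq : q = 1 - p)
    (hM : M = (1 - q ^ (d + 1)) / (p * ((d : ℝ) + 1))) :
    ∑ a ∈ Finset.range 2, ∑ k ∈ Finset.range d,
        ((a : ℝ) / ((a : ℝ) + (k : ℝ) + 1)) * (p ^ a * q ^ (1 - a)) *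
          (((d - 1).choose k : ℝ) * p ^ k * q ^ (d - 1 - k))
      = (1 - M) / (d : ℝ) := by
  obtain ⟨n, rfl⟩ : ∃ n, d = n + 1 := ⟨d - 1, by omega⟩
  have hpq : p + q = 1 := by rw [hq]; ring
  have hp : p ≠ 0 := ne_of_gt hp0
  -- compute T two ways
  set T : ℝ := ∑ j ∈ Finset.range (n+3), ((j:ℝ)-1) * ((n+2).choose j : ℝ) * p^j * q^(n+2-j) with hT
  have hT1 : T = ((n+2:ℕ):ℝ) * p - 1 := by
    have : T = (∑ j ∈ Finset.range (n+3), (j:ℝ) * ((n+2).choose j : ℝ) * p^j * q^(n+2-j))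
        - ∑ j ∈ Finset.range (n+3), ((n+2).choose j : ℝ) * p^j * q^(n+2-j) := by
      rw [hT, ← Finset.sum_sub_distrib]
      exact Finset.sum_congr rfl (fun j _ => by ring)
    rw [this]
    have h1 := sum_kpq p q hpq (n+2)
    have h2 := sum_pq p q hpq (n+2)
    norm_num at h1 h2 ⊢
    rw [h1, h2]
  have hT2 : T = (∑ i ∈ Finset.range (n+1),
      ((i:ℝ)+1) * ((n+2).choose (i+2) : ℝ) * p^(i+2) * q^(n-i)) - q^(n+2) := by
    rw [hT, Finset.sum_range_succ', Finset.sum_range_succ']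
    have e0 : (((0:ℕ):ℝ)-1) * ((n+2).choose 0 : ℝ) * p^0 * q^(n+2-0) = -q^(n+2) := by simp
    have e1 : (((0+1:ℕ):ℝ)-1) * ((n+2).choose (0+1) : ℝ) * p^(0+1) * q^(n+2-(0+1)) = 0 := by
      norm_num
    rw [e0, e1]
    have : ∀ i ∈ Finset.range (n+1),
        (((i+1+1:ℕ):ℝ)-1) * ((n+2).choose (i+1+1) : ℝ) * p^(i+1+1) * q^(n+2-(i+1+1)) =
        ((i:ℝ)+1) * ((n+2).choose (i+2) : ℝ) * p^(i+2) * q^(n-i) := by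
      intro i _
      have : n+2-(i+1+1) = n - i := by omega
      rw [this]
      push_cast
      ring_nf
    rw [Finset.sum_congr rfl this]
    ring
  have key : ∑ i ∈ Finset.range (n+1),
      ((i:ℝ)+1) * ((n+2).choose (i+2) : ℝ) * p^(i+2) * q^(n-i)
      = ((n+2:ℕ):ℝ) * p - 1 + q^(n+2) := by
    have := hT1.symm.trans hT2
    linarith [this]
  -- the a-sum reduces to the a = 1 part
  rw [show (2:ℕ) = 1 + 1 from rfl, Finset.sum_range_succ, Finset.sum_range_succ,
    Finset.sum_range_zero]
  simp only [Nat.cast_zero, Nat.cast_one, zero_div, zero_add, zero_mul, mul_zero,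
    Finset.sum_const_zero, add_zero]
  have hz : ∑ k ∈ Finset.range (n+1),
      ((0:ℝ) / ((0:ℝ) + (k:ℝ) + 1)) * (p ^ 0 * q ^ (1 - 0)) *
        (((n+1-1).choose k : ℝ) * p ^ k * q ^ (n+1-1-k)) = 0 := by
    apply Finset.sum_eq_zero; intro k _; simp
  -- rewrite each term of the a=1 sum
  have hterm : ∀ i ∈ Finset.range (n+1),
      ((1:ℝ) / ((1:ℝ) + (i:ℝ) + 1)) * (p ^ 1 * q ^ (1 - 1)) *
        (((n+1-1).choose i : ℝ) * p ^ i * q ^ (n+1-1-i)) =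
      (((i:ℝ)+1) * ((n+2).choose (i+2) : ℝ) * p^(i+2) * q^(n-i)) /
        (p * ((n:ℝ)+1) * ((n:ℝ)+2)) := by
    intro i hi
    have hi' : i ≤ n := by simpa [Nat.lt_succ_iff] using hi
    have hc1 : (n+1) * n.choose i = (n+1).choose (i+1) * (i+1) := Nat.add_one_mul_choose_eq n i
    have hc2 : (n+2) * (n+1).choose (i+1) = (n+2).choose (i+2) * (i+2) :=
      Nat.add_one_mul_choose_eq (n+1) (i+1)
    have hc : (n+2) * ((n+1) * n.choose i) = (n+2).choose (i+2) * (i+2) * (i+1) := by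
      rw [hc1, ← hc2]; ring
    have hcR : ((n:ℝ)+2) * (((n:ℝ)+1) * (n.choose i : ℝ)) =
        ((n+2).choose (i+2) : ℝ) * ((i:ℝ)+2) * ((i:ℝ)+1) := by
      exact_mod_cast congrArg (Nat.cast (R := ℝ)) hc
    have hs : n+1-1 = n := rfl
    rw [hs]
    have h2 : (1:ℝ) + (i:ℝ) + 1 ≠ 0 := by positivity
    have h3 : ((n:ℝ)+1) ≠ 0 := by positivity
    have h4 : ((n:ℝ)+2) ≠ 0 := by positivity
    field_simp
    rw [pow_succ, pow_succ]
    linear_combination (p^i * p * p * q^(n-i)) * hcR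
  rw [Finset.sum_congr rfl hterm, ← Finset.sum_div, key]
  rw [hM, hq]
  have h3 : ((n:ℝ)+1) ≠ 0 := by positivity
  have h4 : ((n:ℝ)+2) ≠ 0 := by positivity
  push_cast
  field_simp
  ring
end

section
/- Let {W_k} be an i.i.d. sequence of random n×n row-stochastic matrices such that the product W_k⋯W_1 converges almost surely to 1·d^T for a random probability vector d. If x(k) = W_k x(k-1) with initial state x(0), then the a.s. limit x* = d^T x(0) of every coordinate of x(k) satisfies E[x*] = x(0)^T v_1, where v_1 is the normalized left eigenvector of E[W_k] for eigenvalue 1 (assumed simple). -/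
open Matrix MeasureTheory ProbabilityTheory Filter

/-- Borel measurable structure on real matrices (entrywise). -/
noncomputable instance matrixMeasurableSpace {n : ℕ} :
    MeasurableSpace (Matrix (Fin n) (Fin n) ℝ) :=
  (inferInstance : MeasurableSpace (Fin n → Fin n → ℝ))

section Aux

open Polynomial

lemma aux_charpoly_transpose {n : ℕ} (A : Matrix (Fin n) (Fin n) ℝ) :
    A.transpose.charpoly = A.charpoly := by
  rw [Matrix.charpoly, Matrix.charpoly, ← Matrix.det_transpose]
  congr 1
  ext i j
  by_cases h : i = j <;>
    simp [h, Matrix.charmatrix_apply_eq, Matrix.charmatrix_apply_ne, Ne.symm,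
      Matrix.transpose_apply]

lemma aux_charpoly_sub_one {n : ℕ} (A : Matrix (Fin n) (Fin n) ℝ) :
    (A - 1).charpoly = A.charpoly.comp (X + C 1) := by
  let f : ℝ[X] →+* ℝ[X] := eval₂RingHom Polynomial.C (X + C 1)
  have hdet : (A - 1).charpoly = f A.charpoly := by
    rw [Matrix.charpoly, Matrix.charpoly, RingHom.map_det]
    congr 1
    ext i j
    by_cases h : i = j
    · subst h
      simp [Matrix.charmatrix_apply_eq, f, Matrix.one_apply, Matrix.sub_apply, sub_sub]
      ring
    · simp [Matrix.charmatrix_apply_ne _ _ _ h, f, Matrix.one_apply, h, Matrix.sub_apply]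
  rw [hdet]
  simp [f, Polynomial.comp]

lemma aux_left_fixed_unique {n : ℕ} (A : Matrix (Fin n) (Fin n) ℝ)
    (hsimple : Polynomial.rootMultiplicity (1 : ℝ) A.charpoly = 1)
    (v w : Fin n → ℝ) (hv : v ᵥ* A = v) (hw : w ᵥ* A = w)
    (hv1 : ∑ i, v i = 1) (hw1 : ∑ i, w i = 1) : w = v := by
  by_contra hne
  set u : Fin n → ℝ := w - v with hu
  have hu0 : u ≠ 0 := fun h => hne (by simpa [hu, sub_eq_zero] using h)
  have husum : ∑ i, u i = 0 := by simp [hu, Finset.sum_sub_distrib, hv1, hw1]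
  set B : Matrix (Fin n) (Fin n) ℝ := Aᵀ - 1 with hB
  have hBv : B *ᵥ v = 0 := by
    have : Aᵀ *ᵥ v = v := by rw [← Matrix.vecMul_transpose]; simpa using hv
    simp [hB, Matrix.sub_mulVec, this]
  have hBu : B *ᵥ u = 0 := by
    have hw' : Aᵀ *ᵥ w = w := by rw [← Matrix.vecMul_transpose]; simpa using hw
    have hv' : Aᵀ *ᵥ v = v := by rw [← Matrix.vecMul_transpose]; simpa using hv
    simp [hB, hu, Matrix.sub_mulVec, Matrix.mulVec_sub, hw', hv']
  set φ : Module.End ℝ (Fin n → ℝ) := Matrix.mulVecLin B with hφ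
  have hvker : v ∈ LinearMap.ker φ := by simpa [hφ] using hBv
  have huker : u ∈ LinearMap.ker φ := by simpa [hφ] using hBu
  have hli : LinearIndependent ℝ ![v, u] := by
    rw [LinearIndependent.pair_iff]
    intro s t hst
    have hsum : s * (∑ i, v i) + t * (∑ i, u i) = 0 := by
      rw [Finset.mul_sum, Finset.mul_sum, ← Finset.sum_add_distrib]
      calc (∑ i, (s * v i + t * u i)) = ∑ i, (0:ℝ) := by
            refine Finset.sum_congr rfl fun i _ => ?_
            simpa using congrFun hst i
        _ = 0 := by simp
    rw [hv1, husum] at hsum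
    have hs : s = 0 := by linarith
    refine ⟨hs, ?_⟩
    subst hs
    have : t • u = 0 := by
      funext i
      simpa using congrFun hst i
    rcases smul_eq_zero.mp this with h | h
    · exact h
    · exact absurd h hu0
  have hcard : 2 ≤ Module.finrank ℝ (LinearMap.ker φ) := by
    have hmem : ∀ i : Fin 2, ![v, u] i ∈ LinearMap.ker φ := by
      intro i; fin_cases i
      · exact hvker
      · exact huker
    have hli' : LinearIndependent ℝ (fun i : Fin 2 =>
        (⟨![v, u] i, hmem i⟩ : LinearMap.ker φ)) := by
      apply LinearIndependent.of_comp (LinearMap.ker φ).subtype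
      convert hli using 1
      exact funext fun i => rfl
    simpa using hli'.fintype_card_le_finrank
  have hker_le : LinearMap.ker φ ≤ Module.End.maxGenEigenspace φ 0 := by
    intro x hx
    rw [Module.End.mem_maxGenEigenspace]
    exact ⟨1, by simpa using hx⟩
  have hrank : 2 ≤ Module.finrank ℝ (Module.End.maxGenEigenspace φ 0) :=
    le_trans hcard (Submodule.finrank_mono hker_le)
  have hchar : φ.charpoly = B.charpoly := by
    rw [hφ, ← Matrix.toLin'_apply',
      ← LinearMap.charpoly_toMatrix (Matrix.toLin' B) (Pi.basisFun ℝ (Fin n)),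
      LinearMap.toMatrix_eq_toMatrix', LinearMap.toMatrix'_toLin']
  have htd : 2 ≤ natTrailingDegree B.charpoly := by
    rw [← hchar, ← LinearMap.finrank_maxGenEigenspace_zero_eq]
    exact hrank
  have hdvd : (X : ℝ[X]) ^ 2 ∣ B.charpoly := by
    rw [Polynomial.X_pow_dvd_iff]
    intro dd hdd
    exact Polynomial.coeff_eq_zero_of_lt_natTrailingDegree (lt_of_lt_of_le hdd htd)
  have hBchar : B.charpoly = A.charpoly.comp (X + C 1) := by
    rw [hB, aux_charpoly_sub_one, aux_charpoly_transpose]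
  have hdvd2 : ((X : ℝ[X]) - C 1) ^ 2 ∣ A.charpoly := by
    obtain ⟨q, hq⟩ := hdvd
    rw [hBchar] at hq
    refine ⟨q.comp (X - C 1), ?_⟩
    have hcc : (A.charpoly.comp (X + C 1)).comp (X - C 1) = A.charpoly := by
      rw [Polynomial.comp_assoc]
      simp [Polynomial.add_comp, Polynomial.sub_comp]
    rw [← hcc, hq]
    simp [Polynomial.mul_comp, Polynomial.pow_comp]
  have h2 : 2 ≤ rootMultiplicity (1 : ℝ) A.charpoly :=
    (Polynomial.le_rootMultiplicity_iff A.charpoly_monic.ne_zero).mpr hdvd2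
  omega

variable {Ω : Type*} [MeasurableSpace Ω] {n : ℕ}

lemma aux_measurable_matMul {f g : Ω → Matrix (Fin n) (Fin n) ℝ}
    (hf : Measurable f) (hg : Measurable g) : Measurable fun ω => f ω * g ω := by
  apply measurable_pi_lambda
  intro i
  apply measurable_pi_lambda
  intro j
  simp only [Matrix.mul_apply]
  apply Finset.measurable_sum
  intro l _
  exact ((measurable_pi_apply l).comp ((measurable_pi_apply i).comp hf)).mul
    ((measurable_pi_apply j).comp ((measurable_pi_apply l).comp hg))

lemma aux_measurable_fold (L : List ℕ) (f : ℕ → Ω → Matrix (Fin n) (Fin n) ℝ)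
    (hf : ∀ m, Measurable (f m)) :
    ∀ g : Ω → Matrix (Fin n) (Fin n) ℝ, Measurable g →
      Measurable fun ω => L.foldl (fun P m => f m ω * P) (g ω) := by
  induction L with
  | nil => intro g hg; simpa using hg
  | cons a L ih =>
    intro g hg
    exact ih _ (aux_measurable_matMul (hf a) hg)

end Aux

set_option maxHeartbeats 1600000 in
/-- For an i.i.d. sequence of random row-stochastic matrices whose backward products
`W_k ⋯ W_1` converge a.s. to `1 dᵀ` for a random probability vector `d`, the a.s. limit
`x* = dᵀ x(0)` of the consensus dynamics satisfies `E[x*] = x(0)ᵀ v₁`, where `v₁` is the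
normalized left eigenvector of `E[W]` for the (simple) unit eigenvalue. -/
theorem mean_of_asymptotic_consensus_value
    {Ω : Type*} [MeasurableSpace Ω] (μ : Measure Ω) [IsProbabilityMeasure μ]
    {n : ℕ} (hn : 0 < n)
    (W : ℕ → Ω → Matrix (Fin n) (Fin n) ℝ)
    (hmeas : ∀ k, Measurable (W k))
    (hindep : iIndepFun W μ)
    (hident : ∀ k, Measure.map (W k) μ = Measure.map (W 0) μ)
    (hstoch : ∀ k, ∀ᵐ ω ∂μ, (∀ i j, 0 ≤ W k ω i j) ∧
        W k ω *ᵥ (fun _ => (1 : ℝ)) = fun _ => (1 : ℝ))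
    (d : Ω → Fin n → ℝ)
    (hconv : ∀ᵐ ω ∂μ,
        Tendsto (fun k => (List.range k).foldl (fun P m => W (m + 1) ω * P) 1)
          atTop (nhds (Matrix.vecMulVec (fun _ => (1 : ℝ)) (d ω))))
    (EW : Matrix (Fin n) (Fin n) ℝ) (hEW : ∀ i j, EW i j = ∫ ω, W 0 ω i j ∂μ)
    (hsimple : Polynomial.rootMultiplicity (1 : ℝ) EW.charpoly = 1)
    (v : Fin n → ℝ) (hv : v ᵥ* EW = v) (hv1 : ∑ i, v i = 1)
    (x0 : Fin n → ℝ) :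
    ∫ ω, (∑ i, d ω i * x0 i) ∂μ = ∑ i, x0 i * v i := by
  classical
  set P : ℕ → Ω → Matrix (Fin n) (Fin n) ℝ :=
    fun k ω => (List.range k).foldl (fun Q m => W (m + 1) ω * Q) 1 with hP
  have hPzero : ∀ ω, P 0 ω = 1 := fun ω => rfl
  have hPsucc : ∀ k ω, P (k + 1) ω = W (k + 1) ω * P k ω := by
    intro k ω
    simp [hP, List.range_succ]
  have hPmeas : ∀ k, Measurable (P k) := by
    intro k
    exact aux_measurable_fold (List.range k) (fun m => W (m + 1)) (fun m => hmeas (m + 1))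
      (fun _ => 1) measurable_const
  have hPe : ∀ k (i j : Fin n), Measurable fun ω => P k ω i j := fun k i j =>
    (measurable_pi_apply j).comp ((measurable_pi_apply i).comp (hPmeas k))
  -- stochasticity of the products, a.s.
  have hG : ∀ᵐ ω ∂μ, ∀ k, (∀ i j, 0 ≤ W k ω i j) ∧
      W k ω *ᵥ (fun _ => (1 : ℝ)) = fun _ => (1 : ℝ) := ae_all_iff.mpr hstoch
  have hstochP : ∀ᵐ ω ∂μ, ∀ k, (∀ i j, 0 ≤ P k ω i j) ∧ (∀ i, ∑ j, P k ω i j = 1) := by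
    filter_upwards [hG] with ω hω
    intro k
    induction k with
    | zero =>
      constructor
      · intro i j
        rw [hPzero]
        by_cases h : i = j <;> simp [Matrix.one_apply, h]
      · intro i
        rw [hPzero]
        simp [Matrix.one_apply]
    | succ k ih =>
      have hWpos := (hω (k + 1)).1
      have hWsum : ∀ i, ∑ j, W (k + 1) ω i j = 1 := by
        intro i
        have := congrFun (hω (k + 1)).2 i
        simpa [Matrix.mulVec, dotProduct] using this
      constructor
      · intro i j
        rw [hPsucc, Matrix.mul_apply]
        exact Finset.sum_nonneg fun l _ => mul_nonneg (hWpos i l) (ih.1 l j)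
      · intro i
        have : ∑ j, P (k + 1) ω i j = ∑ l, W (k + 1) ω i l * (∑ j, P k ω l j) := by
          simp only [hPsucc, Matrix.mul_apply, Finset.mul_sum]
          rw [Finset.sum_comm]
        rw [this]
        simp only [ih.2, mul_one]
        exact hWsum i
  -- integrability of W and P entries
  have hWint : ∀ k (i l : Fin n), Integrable (fun ω => W k ω i l) μ := by
    intro k i l
    refine Integrable.mono' (integrable_const 1)
      (((measurable_pi_apply l).comp ((measurable_pi_apply i).comp (hmeas k))).aestronglyMeasurable) ?_
    filter_upwards [hstoch k] with ω hω
    have h0 := hω.1 i l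
    have hsum : ∑ j, W k ω i j = 1 := by
      have := congrFun hω.2 i
      simpa [Matrix.mulVec, dotProduct] using this
    have hle : W k ω i l ≤ 1 := by
      rw [← hsum]
      exact Finset.single_le_sum (fun j _ => hω.1 i j) (Finset.mem_univ l)
    rw [Real.norm_eq_abs, abs_le]
    exact ⟨by linarith, hle⟩
  have hPbound : ∀ k, ∀ᵐ ω ∂μ, ∀ (i j : Fin n), 0 ≤ P k ω i j ∧ P k ω i j ≤ 1 := by
    intro k
    filter_upwards [hstochP] with ω hω i j
    refine ⟨(hω k).1 i j, ?_⟩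
    rw [← (hω k).2 i]
    exact Finset.single_le_sum (fun l _ => (hω k).1 i l) (Finset.mem_univ j)
  have hPint : ∀ k (i j : Fin n), Integrable (fun ω => P k ω i j) μ := by
    intro k i j
    refine Integrable.mono' (integrable_const 1) (hPe k i j).aestronglyMeasurable ?_
    filter_upwards [hPbound k] with ω hω
    rw [Real.norm_eq_abs, abs_le]
    exact ⟨by linarith [(hω i j).1], (hω i j).2⟩
  -- the key independence
  have hIndep : ∀ k (i l j : Fin n),
      IndepFun (fun ω => W (k + 1) ω i l) (fun ω => P k ω l j) μ := by
    intro k i l j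
    set S : Finset ℕ := {k + 1} with hS
    set T : Finset ℕ := Finset.range (k + 1) with hT
    have hdisj : Disjoint S T := by
      simp [hS, hT, Finset.disjoint_left]
    have base := hindep.indepFun_finset S T hdisj hmeas
    set F1 : ({x // x ∈ S} → Matrix (Fin n) (Fin n) ℝ) → ℝ :=
      fun g => g ⟨k + 1, Finset.mem_singleton_self _⟩ i l with hF1
    set F2 : ({x // x ∈ T} → Matrix (Fin n) (Fin n) ℝ) → ℝ :=
      fun g => ((List.range k).foldl
        (fun (Q : Matrix (Fin n) (Fin n) ℝ) m =>
          (if h : m + 1 ∈ T then g ⟨m + 1, h⟩ else 1) * Q)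
        (1 : Matrix (Fin n) (Fin n) ℝ)) l j with hF2
    have hF1m : Measurable F1 :=
      (measurable_pi_apply l).comp ((measurable_pi_apply i).comp (measurable_pi_apply _))
    have hF2m : Measurable F2 := by
      apply (measurable_pi_apply j).comp
      apply (measurable_pi_apply l).comp
      exact aux_measurable_fold (Ω := {x // x ∈ T} → Matrix (Fin n) (Fin n) ℝ)
        (List.range k)
        (fun m g => if h : m + 1 ∈ T then g ⟨m + 1, h⟩ else 1)
        (fun m => by
          by_cases h : m + 1 ∈ T
          · simp only [dif_pos h]
            exact measurable_pi_apply _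
          · simp only [dif_neg h]
            exact measurable_const)
        (fun _ => 1) measurable_const
    have hcomp := (base.comp hF1m hF2m)
    have he1 : (F1 ∘ fun a (i : S) => W i a) = fun ω => W (k + 1) ω i l := rfl
    have he2 : (F2 ∘ fun a (i : T) => W i a) = fun ω => P k ω l j := by
      funext ω
      show ((List.range k).foldl
        (fun (Q : Matrix (Fin n) (Fin n) ℝ) m =>
          (if h : m + 1 ∈ T then W (m + 1) ω else 1) * Q) 1) l j = _
      have hfold : (List.range k).foldl
          (fun (Q : Matrix (Fin n) (Fin n) ℝ) m =>
            (if h : m + 1 ∈ T then W (m + 1) ω else 1) * Q) 1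
          = (List.range k).foldl (fun Q m => W (m + 1) ω * Q) 1 := by
        apply List.foldl_ext
        intro Q m hm
        have hmk : m + 1 ∈ T := by
          rw [hT, Finset.mem_range]
          have := List.mem_range.mp hm
          omega
        rw [dif_pos hmk]
      rw [hfold]
    rw [he1, he2] at hcomp
    exact hcomp
  -- expectation of W k entries
  have hWexp : ∀ k (i l : Fin n), ∫ ω, W k ω i l ∂μ = EW i l := by
    intro k i l
    have hev : Measurable fun M : Matrix (Fin n) (Fin n) ℝ => M i l :=
      (measurable_pi_apply l).comp (measurable_pi_apply i)
    rw [hEW]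
    calc ∫ ω, W k ω i l ∂μ
        = ∫ M, M i l ∂(Measure.map (W k) μ) :=
          (integral_map (hmeas k).aemeasurable hev.aestronglyMeasurable).symm
      _ = ∫ M, M i l ∂(Measure.map (W 0) μ) := by rw [hident k]
      _ = ∫ ω, W 0 ω i l ∂μ :=
          integral_map (hmeas 0).aemeasurable hev.aestronglyMeasurable
  -- moments of the products
  have hEWk : ∀ k (i j : Fin n), ∫ ω, P k ω i j ∂μ = (EW ^ k) i j := by
    intro k
    induction k with
    | zero =>
      intro i j
      simp only [pow_zero]
      have : (fun ω => P 0 ω i j) = fun _ : Ω => (1 : Matrix (Fin n) (Fin n) ℝ) i j := rfl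
      rw [this, integral_const]
      simp
    | succ k ih =>
      intro i j
      have hrw : (fun ω => P (k + 1) ω i j)
          = fun ω => ∑ l, W (k + 1) ω i l * P k ω l j := by
        funext ω
        rw [hPsucc, Matrix.mul_apply]
      rw [hrw]
      have hint : ∀ l : Fin n, Integrable (fun ω => W (k + 1) ω i l * P k ω l j) μ := by
        intro l
        refine Integrable.mono' (integrable_const 1)
          (((((measurable_pi_apply l).comp ((measurable_pi_apply i).comp
            (hmeas (k + 1))))).mul (hPe k l j)).aestronglyMeasurable) ?_
        filter_upwards [hstoch (k + 1), hPbound k] with ω h1 h2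
        have hWsum : ∑ j', W (k + 1) ω i j' = 1 := by
          have := congrFun h1.2 i
          simpa [Matrix.mulVec, dotProduct] using this
        have hW1 : W (k + 1) ω i l ≤ 1 := by
          rw [← hWsum]
          exact Finset.single_le_sum (fun j' _ => h1.1 i j') (Finset.mem_univ l)
        have hW0 := h1.1 i l
        rw [Real.norm_eq_abs, abs_mul]
        calc |W (k + 1) ω i l| * |P k ω l j| ≤ 1 * 1 := by
              apply mul_le_mul
              · rw [abs_le]; exact ⟨by linarith, hW1⟩
              · rw [abs_le]; exact ⟨by linarith [(h2 l j).1], (h2 l j).2⟩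
              · exact abs_nonneg _
              · norm_num
          _ = 1 := by norm_num
      rw [integral_finset_sum _ fun l _ => hint l]
      have hterm : ∀ l : Fin n, ∫ ω, W (k + 1) ω i l * P k ω l j ∂μ
          = EW i l * (EW ^ k) l j := by
        intro l
        have h0 := (hIndep k i l j).integral_mul_eq_mul_integral (hWint (k + 1) i l).aestronglyMeasurable (hPint k l j).aestronglyMeasurable
        have h1 : (fun ω => W (k + 1) ω i l * P k ω l j)
            = (fun ω => W (k + 1) ω i l) * (fun ω => P k ω l j) := rfl
        rw [h1, h0, hWexp, ih]
      rw [Finset.sum_congr rfl fun l _ => hterm l]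
      rw [pow_succ', Matrix.mul_apply]
  -- a.s. facts about d
  set i0 : Fin n := ⟨0, hn⟩ with hi0
  have hdfacts : ∀ᵐ ω ∂μ,
      (∀ i j, Tendsto (fun k => P k ω i j) atTop (nhds (d ω j))) ∧
      (∀ j, 0 ≤ d ω j ∧ d ω j ≤ 1) ∧ (∑ j, d ω j = 1) := by
    filter_upwards [hconv, hstochP] with ω h1 h2
    have htde : ∀ i j, Tendsto (fun k => P k ω i j) atTop (nhds (d ω j)) := by
      intro i j
      have h4 : Tendsto (fun k => P k ω i) atTop
          (nhds (Matrix.vecMulVec (fun _ => (1:ℝ)) (d ω) i)) :=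
        ((continuous_apply i).tendsto _).comp h1
      have h5 : Tendsto (fun k => P k ω i j) atTop
          (nhds (Matrix.vecMulVec (fun _ => (1:ℝ)) (d ω) i j)) :=
        ((continuous_apply j).tendsto _).comp h4
      simpa [Matrix.vecMulVec_apply] using h5
    have hb1 : ∀ k (i j : Fin n), P k ω i j ≤ 1 := by
      intro k i j
      rw [← (h2 k).2 i]
      exact Finset.single_le_sum (fun l _ => (h2 k).1 i l) (Finset.mem_univ j)
    refine ⟨htde, fun j => ⟨?_, ?_⟩, ?_⟩
    · exact ge_of_tendsto (htde i0 j) (Eventually.of_forall fun k => (h2 k).1 i0 j)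
    · exact le_of_tendsto (htde i0 j) (Eventually.of_forall fun k => hb1 k i0 j)
    · have hs : Tendsto (fun k => ∑ j, P k ω i0 j) atTop (nhds (∑ j, d ω j)) :=
        tendsto_finset_sum _ (fun j _ => htde i0 j)
      have hconst : (fun k => ∑ j, P k ω i0 j) = fun _ => (1:ℝ) :=
        funext fun k => (h2 k).2 i0
      rw [hconst] at hs
      exact tendsto_nhds_unique hs tendsto_const_nhds
  have hdm : ∀ j, AEMeasurable (fun ω => d ω j) μ := by
    intro j
    apply aemeasurable_of_tendsto_metrizable_ae' (fun k => (hPe k i0 j).aemeasurable)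
    filter_upwards [hdfacts] with ω hω using hω.1 i0 j
  have hdint : ∀ j, Integrable (fun ω => d ω j) μ := by
    intro j
    refine Integrable.mono' (integrable_const 1) (hdm j).aestronglyMeasurable ?_
    filter_upwards [hdfacts] with ω hω
    rw [Real.norm_eq_abs, abs_le]
    exact ⟨by linarith [(hω.2.1 j).1], (hω.2.1 j).2⟩
  set e : Fin n → ℝ := fun j => ∫ ω, d ω j ∂μ with he
  have htend : ∀ (i j : Fin n), Tendsto (fun k => (EW ^ k) i j) atTop (nhds (e j)) := by
    intro i j
    have hfe : (fun k => (EW ^ k) i j) = fun k => ∫ ω, P k ω i j ∂μ :=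
      funext fun k => (hEWk k i j).symm
    rw [hfe]
    apply tendsto_integral_of_dominated_convergence (fun _ => (1:ℝ))
      (fun k => (hPe k i j).aestronglyMeasurable) (integrable_const 1)
    · intro k
      filter_upwards [hPbound k] with ω hω
      rw [Real.norm_eq_abs, abs_le]
      exact ⟨by linarith [(hω i j).1], (hω i j).2⟩
    · filter_upwards [hdfacts] with ω hω using hω.1 i j
  have hefix : e ᵥ* EW = e := by
    funext j
    have h1 : Tendsto (fun k => (EW ^ (k + 1)) i0 j) atTop (nhds (e j)) :=
      (htend i0 j).comp (tendsto_add_atTop_nat 1)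
    have h2 : Tendsto (fun k => (EW ^ (k + 1)) i0 j) atTop (nhds ((e ᵥ* EW) j)) := by
      have hrw : (fun k => (EW ^ (k + 1)) i0 j) = fun k => ∑ l, (EW ^ k) i0 l * EW l j := by
        funext k
        rw [pow_succ, Matrix.mul_apply]
      rw [hrw]
      have hvm : (e ᵥ* EW) j = ∑ l, e l * EW l j := by
        simp [Matrix.vecMul, dotProduct]
      rw [hvm]
      exact tendsto_finset_sum _ fun l _ => (htend i0 l).mul_const (EW l j)
    exact tendsto_nhds_unique h2 h1
  have hesum : ∑ j, e j = 1 := by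
    have h1 : ∑ j, e j = ∫ ω, ∑ j, d ω j ∂μ :=
      (integral_finset_sum _ fun j _ => hdint j).symm
    rw [h1]
    have h2 : ∫ ω, ∑ j, d ω j ∂μ = ∫ _ω, (1:ℝ) ∂μ := by
      apply integral_congr_ae
      filter_upwards [hdfacts] with ω hω using hω.2.2
    rw [h2]
    simp
  have hev : e = v := aux_left_fixed_unique EW hsimple v e hv hefix hv1 hesum
  calc ∫ ω, (∑ i, d ω i * x0 i) ∂μ = ∑ i, ∫ ω, d ω i * x0 i ∂μ :=
        integral_finset_sum _ fun i _ => (hdint i).mul_const (x0 i)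
    _ = ∑ i, x0 i * v i := by
        refine Finset.sum_congr rfl fun i _ => ?_
        rw [integral_mul_const]
        rw [show (∫ ω, d ω i ∂μ) = e i from rfl, hev]
        ring
end

section
/- Let W be a random n×n row-stochastic matrix with E[W⊗W] having a simple unit eigenvalue, and suppose the infinite product of i.i.d. copies converges a.s. to 1·d^T. Then Var(d^T x(0)) = (x(0)⊗x(0))^T v_1(E[W⊗W]) - (x(0)^T v_1(E[W]))^2, where v_1(·) denotes the normalized left eigenvector for eigenvalue 1. -/
open Matrix MeasureTheory ProbabilityTheory Filter

set_option maxHeartbeats 1000000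

namespace ConsensusAux

variable {n : ℕ}

/-- The backward product `W_k ⋯ W_1`. -/
def prodFun (f : ℕ → Matrix (Fin n) (Fin n) ℝ) (k : ℕ) : Matrix (Fin n) (Fin n) ℝ :=
  (List.range k).foldl (fun P m => f (m + 1) * P) 1

lemma prodFun_zero (f : ℕ → Matrix (Fin n) (Fin n) ℝ) : prodFun f 0 = 1 := rfl

lemma prodFun_succ (f : ℕ → Matrix (Fin n) (Fin n) ℝ) (k : ℕ) :
    prodFun f (k + 1) = f (k + 1) * prodFun f k := by
  simp [prodFun, List.range_succ]

lemma prodFun_congr {f g : ℕ → Matrix (Fin n) (Fin n) ℝ} {k : ℕ}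
    (h : ∀ m, m < k → f (m + 1) = g (m + 1)) : prodFun f k = prodFun g k := by
  induction k with
  | zero => rfl
  | succ k ih =>
    rw [prodFun_succ, prodFun_succ, h k (Nat.lt_succ_self k),
      ih fun m hm => h m (hm.trans (Nat.lt_succ_self k))]

/-- Row-stochasticity. -/
def IsStoch (M : Matrix (Fin n) (Fin n) ℝ) : Prop :=
  (∀ i j, 0 ≤ M i j) ∧ M *ᵥ (fun _ => (1 : ℝ)) = fun _ => (1 : ℝ)

lemma IsStoch.one : IsStoch (1 : Matrix (Fin n) (Fin n) ℝ) := by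
  constructor
  · intro i j
    by_cases h : i = j <;> simp [Matrix.one_apply, h]
  · funext i
    simp [Matrix.mulVec, dotProduct, Matrix.one_apply]

lemma IsStoch.mul {A B : Matrix (Fin n) (Fin n) ℝ} (hA : IsStoch A) (hB : IsStoch B) :
    IsStoch (A * B) := by
  constructor
  · intro i j
    rw [Matrix.mul_apply]
    exact Finset.sum_nonneg fun l _ => mul_nonneg (hA.1 i l) (hB.1 l j)
  · rw [← Matrix.mulVec_mulVec, hB.2, hA.2]

lemma IsStoch.rowSum {M : Matrix (Fin n) (Fin n) ℝ} (hM : IsStoch M) (i : Fin n) :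
    ∑ j, M i j = 1 := by
  have := congrFun hM.2 i
  simpa [Matrix.mulVec, dotProduct] using this

lemma IsStoch.le_one {M : Matrix (Fin n) (Fin n) ℝ} (hM : IsStoch M) (i j : Fin n) :
    M i j ≤ 1 := by
  rw [← hM.rowSum i]
  exact Finset.single_le_sum (fun l _ => hM.1 i l) (Finset.mem_univ j)

lemma isStoch_prodFun {f : ℕ → Matrix (Fin n) (Fin n) ℝ}
    (hf : ∀ m, IsStoch (f m)) (k : ℕ) : IsStoch (prodFun f k) := by
  induction k with
  | zero => exact IsStoch.one
  | succ k ih => rw [prodFun_succ]; exact (hf (k + 1)).mul ih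

lemma measurable_entry {α : Type*} [MeasurableSpace α]
    {F : α → Matrix (Fin n) (Fin n) ℝ} (hF : Measurable F) (i j : Fin n) :
    Measurable (fun a => F a i j) :=
  (hF.eval (a := i)).eval (a := j)

lemma measurable_matrixMul {α : Type*} [MeasurableSpace α]
    {F G : α → Matrix (Fin n) (Fin n) ℝ} (hF : Measurable F) (hG : Measurable G) :
    Measurable (fun a => F a * G a) := by
  apply measurable_pi_lambda
  intro i
  apply measurable_pi_lambda
  intro j
  simp only [Matrix.mul_apply]
  exact Finset.measurable_sum _ fun l _ =>
    (measurable_entry hF i l).mul (measurable_entry hG l j)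

lemma measurable_prodFun {α : Type*} [MeasurableSpace α]
    {F : ℕ → α → Matrix (Fin n) (Fin n) ℝ} (hF : ∀ m, Measurable (F m)) (k : ℕ) :
    Measurable (fun a => prodFun (fun m => F m a) k) := by
  induction k with
  | zero => simpa [prodFun_zero] using measurable_const
  | succ k ih =>
    simp only [prodFun_succ]
    exact measurable_matrixMul (hF (k + 1)) ih

end ConsensusAux

open ConsensusAux

/-- For i.i.d. random row-stochastic matrices whose backward products converge a.s. to
`1 dᵀ`, and such that `E[W ⊗ W]` has a simple unit eigenvalue, the variance of the
asymptotic consensus value `x* = dᵀ x(0)` equals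
`(x(0) ⊗ x(0))ᵀ v₁(E[W⊗W]) - (x(0)ᵀ v₁(E[W]))²`. -/
theorem variance_of_asymptotic_consensus_value
    {Ω : Type*} [MeasurableSpace Ω] (μ : Measure Ω) [IsProbabilityMeasure μ]
    {n : ℕ} (hn : 0 < n)
    (W : ℕ → Ω → Matrix (Fin n) (Fin n) ℝ)
    (hmeas : ∀ k, Measurable (W k))
    (hindep : iIndepFun W μ)
    (hident : ∀ k, Measure.map (W k) μ = Measure.map (W 0) μ)
    (hstoch : ∀ k, ∀ᵐ ω ∂μ, (∀ i j, 0 ≤ W k ω i j) ∧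
        W k ω *ᵥ (fun _ => (1 : ℝ)) = fun _ => (1 : ℝ))
    (d : Ω → Fin n → ℝ)
    (hconv : ∀ᵐ ω ∂μ,
        Tendsto (fun k => (List.range k).foldl (fun P m => W (m + 1) ω * P) 1)
          atTop (nhds (Matrix.vecMulVec (fun _ => (1 : ℝ)) (d ω))))
    (EW : Matrix (Fin n) (Fin n) ℝ) (hEW : ∀ i j, EW i j = ∫ ω, W 0 ω i j ∂μ)
    (ER : Matrix (Fin n × Fin n) (Fin n × Fin n) ℝ)
    (hER : ∀ p q : Fin n × Fin n,
        ER p q = ∫ ω, W 0 ω p.1 q.1 * W 0 ω p.2 q.2 ∂μ)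
    (hsimple : Polynomial.rootMultiplicity (1 : ℝ) ER.charpoly = 1)
    (v : Fin n → ℝ) (hv : v ᵥ* EW = v) (hv1 : ∑ i, v i = 1)
    (vR : Fin n × Fin n → ℝ) (hvR : vR ᵥ* ER = vR) (hvR1 : ∑ p, vR p = 1)
    (x0 : Fin n → ℝ) :
    variance (fun ω => ∑ i, d ω i * x0 i) μ
      = (∑ p : Fin n × Fin n, x0 p.1 * x0 p.2 * vR p) - (∑ i, x0 i * v i) ^ 2 := by
  classical
  set P : ℕ → Ω → Matrix (Fin n) (Fin n) ℝ :=
    fun k ω => prodFun (fun m => W m ω) k with hPdef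
  -- measurability of entries
  have hWm : ∀ k (i j : Fin n), Measurable (fun ω => W k ω i j) :=
    fun k i j => measurable_entry (hmeas k) i j
  have hPm : ∀ k, Measurable (P k) := fun k => measurable_prodFun hmeas k
  have hPem : ∀ k (i j : Fin n), Measurable (fun ω => P k ω i j) :=
    fun k i j => measurable_entry (hPm k) i j
  have hMe : ∀ i j : Fin n, Measurable (fun M : Matrix (Fin n) (Fin n) ℝ => M i j) :=
    fun i j => (measurable_pi_apply j).comp (measurable_pi_apply i)
  -- a.e. stochasticity of products
  have hstochP : ∀ᵐ ω ∂μ, ∀ k, IsStoch (P k ω) := by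
    have h := (MeasureTheory.ae_all_iff).2 hstoch
    filter_upwards [h] with ω hω
    intro k
    induction k with
    | zero => exact IsStoch.one
    | succ k ih =>
      have : P (k + 1) ω = W (k + 1) ω * P k ω := prodFun_succ _ k
      rw [this]
      exact IsStoch.mul (hω (k + 1)) ih
  -- independence of W (k+1) and P k
  have hindWP : ∀ k, IndepFun (W (k + 1)) (P k) μ := by
    intro k
    have hdisj : Disjoint ({k + 1} : Finset ℕ) (Finset.range (k + 1)) := by
      simp [Finset.disjoint_singleton_left]
    have hST := hindep.indepFun_finset {k + 1} (Finset.range (k + 1)) hdisj hmeas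
    have hk1 : (k + 1) ∈ ({k + 1} : Finset ℕ) := Finset.mem_singleton_self _
    set φS : (({k + 1} : Finset ℕ) → Matrix (Fin n) (Fin n) ℝ) → Matrix (Fin n) (Fin n) ℝ :=
      fun g => g ⟨k + 1, hk1⟩ with hφS
    set φT : ((Finset.range (k + 1) : Finset ℕ) → Matrix (Fin n) (Fin n) ℝ) →
        Matrix (Fin n) (Fin n) ℝ :=
      fun g => prodFun (fun m => if hm : m ∈ Finset.range (k + 1) then g ⟨m, hm⟩ else 1) k
      with hφT
    have hφSm : Measurable φS := measurable_pi_apply _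
    have hφTm : Measurable φT := by
      let F : ℕ → ((Finset.range (k + 1) : Finset ℕ) → Matrix (Fin n) (Fin n) ℝ) →
          Matrix (Fin n) (Fin n) ℝ :=
        fun m g => if hm : m ∈ Finset.range (k + 1) then g ⟨m, hm⟩ else 1
      have hF : ∀ m, Measurable (F m) := by
        intro m
        show Measurable (fun g : (Finset.range (k + 1) : Finset ℕ) →
          Matrix (Fin n) (Fin n) ℝ =>
          if hm : m ∈ Finset.range (k + 1) then g ⟨m, hm⟩ else 1)
        by_cases hm : m ∈ Finset.range (k + 1)
        · simp only [dif_pos hm]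
          exact measurable_pi_apply _
        · simp only [dif_neg hm]
          exact measurable_const
      exact measurable_prodFun (F := F) hF k
    have h2 := hST.comp hφSm hφTm
    have e1 : (fun ω => φS (fun i : ({k + 1} : Finset ℕ) => W i ω)) = W (k + 1) := rfl
    have e2 : (fun ω => φT (fun i : (Finset.range (k + 1) : Finset ℕ) => W i ω)) = P k := by
      funext ω
      refine prodFun_congr fun m hm => ?_
      have hm' : m + 1 ∈ Finset.range (k + 1) := by
        simp [Finset.mem_range]; omega
      simp [hφT, hm']
    rw [show (φS ∘ fun a (i : ({k + 1} : Finset ℕ)) => W i a) = W (k + 1) from e1,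
      show (φT ∘ fun a (i : (Finset.range (k + 1) : Finset ℕ)) => W i a) = P k from e2] at h2
    exact h2
  -- integrability helper
  have hint : ∀ (f : Ω → ℝ), Measurable f → (∀ᵐ ω ∂μ, ‖f ω‖ ≤ 1) → Integrable f μ := by
    intro f hf hbd
    exact Integrable.mono' (integrable_const 1) hf.aestronglyMeasurable hbd
  have hmulint : ∀ (X Y : Ω → ℝ), IndepFun X Y μ → Integrable X μ → Integrable Y μ →
      ∫ ω, X ω * Y ω ∂μ = (∫ ω, X ω ∂μ) * ∫ ω, Y ω ∂μ :=
    fun X Y h hX hY => IndepFun.integral_fun_mul_eq_mul_integral h hX.1 hY.1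
  -- a.e. bounds
  have hWbd : ∀ k, ∀ᵐ ω ∂μ, ∀ i j, ‖W k ω i j‖ ≤ 1 := by
    intro k
    filter_upwards [hstoch k] with ω hω
    intro i j
    rw [Real.norm_eq_abs, abs_le]
    exact ⟨le_trans (by norm_num) (hω.1 i j), IsStoch.le_one hω i j⟩
  have hPbd : ∀ᵐ ω ∂μ, ∀ k (i j : Fin n), ‖P k ω i j‖ ≤ 1 := by
    filter_upwards [hstochP] with ω hω
    intro k i j
    rw [Real.norm_eq_abs, abs_le]
    exact ⟨le_trans (by norm_num) ((hω k).1 i j), (hω k).le_one i j⟩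
  have hWint : ∀ k (i j : Fin n), Integrable (fun ω => W k ω i j) μ := by
    intro k i j
    refine hint _ (hWm k i j) ?_
    filter_upwards [hWbd k] with ω hω using hω i j
  have hPint : ∀ k (i j : Fin n), Integrable (fun ω => P k ω i j) μ := by
    intro k i j
    refine hint _ (hPem k i j) ?_
    filter_upwards [hPbd] with ω hω using hω k i j
  have hWWint : ∀ k (i j i' j' : Fin n),
      Integrable (fun ω => W k ω i j * W k ω i' j') μ := by
    intro k i j i' j'
    refine hint _ ((hWm k i j).mul (hWm k i' j')) ?_
    filter_upwards [hWbd k] with ω hω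
    calc ‖W k ω i j * W k ω i' j'‖ = ‖W k ω i j‖ * ‖W k ω i' j'‖ := norm_mul _ _
      _ ≤ 1 * 1 := mul_le_mul (hω i j) (hω i' j') (norm_nonneg _) zero_le_one
      _ = 1 := one_mul 1
  have hPPint : ∀ k (i j i' j' : Fin n),
      Integrable (fun ω => P k ω i j * P k ω i' j') μ := by
    intro k i j i' j'
    refine hint _ ((hPem k i j).mul (hPem k i' j')) ?_
    filter_upwards [hPbd] with ω hω
    calc ‖P k ω i j * P k ω i' j'‖ = ‖P k ω i j‖ * ‖P k ω i' j'‖ := norm_mul _ _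
      _ ≤ 1 * 1 := mul_le_mul (hω k i j) (hω k i' j') (norm_nonneg _) zero_le_one
      _ = 1 := one_mul 1
  -- expectations of W entries via identical distribution
  have hEWk : ∀ k (i j : Fin n), ∫ ω, W k ω i j ∂μ = EW i j := by
    intro k i j
    rw [hEW]
    rw [← integral_map (hmeas k).aemeasurable (hMe i j).aestronglyMeasurable, hident k,
      integral_map (hmeas 0).aemeasurable (hMe i j).aestronglyMeasurable]
  have hERk : ∀ k (p q : Fin n × Fin n),
      ∫ ω, W k ω p.1 q.1 * W k ω p.2 q.2 ∂μ = ER p q := by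
    intro k p q
    rw [hER]
    have hφ : Measurable (fun M : Matrix (Fin n) (Fin n) ℝ => M p.1 q.1 * M p.2 q.2) :=
      (hMe p.1 q.1).mul (hMe p.2 q.2)
    rw [← integral_map (hmeas k).aemeasurable hφ.aestronglyMeasurable, hident k,
      integral_map (hmeas 0).aemeasurable hφ.aestronglyMeasurable]
  -- E[P k] = EW ^ k
  have hEP : ∀ k (i j : Fin n), ∫ ω, P k ω i j ∂μ = (EW ^ k) i j := by
    intro k
    induction k with
    | zero =>
      intro i j
      simp [hPdef, prodFun_zero]
    | succ k ih =>
      intro i j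
      have hexp : ∀ ω, P (k + 1) ω i j = ∑ l, W (k + 1) ω i l * P k ω l j := by
        intro ω
        rw [show P (k + 1) ω = W (k + 1) ω * P k ω from prodFun_succ _ k, Matrix.mul_apply]
      simp only [hexp]
      rw [integral_finset_sum _ fun l _ => ?_]
      · have hterm : ∀ l : Fin n, ∫ ω, W (k + 1) ω i l * P k ω l j ∂μ
            = EW i l * (EW ^ k) l j := by
          intro l
          have hind : IndepFun (fun ω => W (k + 1) ω i l) (fun ω => P k ω l j) μ :=
            (hindWP k).comp (hMe i l) (hMe l j)
          rw [hmulint _ _ hind (hWint (k + 1) i l) (hPint k l j),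
            hEWk (k + 1) i l, ih l j]
        simp only [hterm]
        rw [pow_succ', Matrix.mul_apply]
      · have hind : IndepFun (fun ω => W (k + 1) ω i l) (fun ω => P k ω l j) μ :=
          (hindWP k).comp (hMe i l) (hMe l j)
        exact hind.integrable_mul (hWint (k + 1) i l) (hPint k l j)
  -- E[P k ⊗ P k] = ER ^ k
  have hEP2 : ∀ k (p q : Fin n × Fin n),
      ∫ ω, P k ω p.1 q.1 * P k ω p.2 q.2 ∂μ = (ER ^ k) p q := by
    intro k
    induction k with
    | zero =>
      intro p q
      by_cases h : p = q
      · subst h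
        simp [hPdef, prodFun_zero, Matrix.one_apply]
      · have h1 : ¬(p.1 = q.1 ∧ p.2 = q.2) := by
          intro hc
          exact h (Prod.ext hc.1 hc.2)
        simp only [hPdef, prodFun_zero, pow_zero, Matrix.one_apply]
        by_cases h11 : p.1 = q.1
        · have h22 : ¬ p.2 = q.2 := fun hc => h1 ⟨h11, hc⟩
          simp [h11, h22, if_neg h]
        · simp [h11, if_neg h]
    | succ k ih =>
      intro p q
      have hexp : ∀ ω, P (k + 1) ω p.1 q.1 * P (k + 1) ω p.2 q.2
          = ∑ l1, ∑ l2, (W (k + 1) ω p.1 l1 * W (k + 1) ω p.2 l2)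
            * (P k ω l1 q.1 * P k ω l2 q.2) := by
        intro ω
        rw [show P (k + 1) ω = W (k + 1) ω * P k ω from prodFun_succ _ k,
          Matrix.mul_apply, Matrix.mul_apply, Finset.sum_mul_sum]
        exact Finset.sum_congr rfl fun l1 _ => Finset.sum_congr rfl fun l2 _ => by ring
      have hindterm : ∀ l1 l2 : Fin n,
          IndepFun (fun ω => W (k + 1) ω p.1 l1 * W (k + 1) ω p.2 l2)
            (fun ω => P k ω l1 q.1 * P k ω l2 q.2) μ := by
        intro l1 l2
        exact (hindWP k).comp ((hMe p.1 l1).mul (hMe p.2 l2))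
          ((hMe l1 q.1).mul (hMe l2 q.2))
      have hintgr : ∀ l1 l2 : Fin n, Integrable (fun ω =>
          (W (k + 1) ω p.1 l1 * W (k + 1) ω p.2 l2) * (P k ω l1 q.1 * P k ω l2 q.2)) μ :=
        fun l1 l2 => (hindterm l1 l2).integrable_mul (hWWint (k + 1) p.1 l1 p.2 l2)
          (hPPint k l1 q.1 l2 q.2)
      simp only [hexp]
      rw [integral_finset_sum _ fun l1 _ => integrable_finset_sum _ fun l2 _ => hintgr l1 l2]
      have : ∀ l1 : Fin n, ∫ ω, ∑ l2, (W (k + 1) ω p.1 l1 * W (k + 1) ω p.2 l2)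
          * (P k ω l1 q.1 * P k ω l2 q.2) ∂μ
          = ∑ l2, ER p (l1, l2) * (ER ^ k) (l1, l2) q := by
        intro l1
        rw [integral_finset_sum _ fun l2 _ => hintgr l1 l2]
        refine Finset.sum_congr rfl fun l2 _ => ?_
        rw [hmulint _ _ (hindterm l1 l2)
          (hWWint (k + 1) p.1 l1 p.2 l2) (hPPint k l1 q.1 l2 q.2),
          hERk (k + 1) p (l1, l2), ih (l1, l2) q]
      simp only [this]
      rw [pow_succ', Matrix.mul_apply, Fintype.sum_prod_type]
  -- entrywise a.e. convergence
  have hdconv : ∀ᵐ ω ∂μ, ∀ i j : Fin n, Tendsto (fun k => P k ω i j) atTop (nhds (d ω j)) := by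
    filter_upwards [hconv] with ω hω
    intro i j
    have hcont : Continuous (fun M : Matrix (Fin n) (Fin n) ℝ => M i j) :=
      (continuous_apply j).comp (continuous_apply i)
    have := (hcont.tendsto _).comp hω
    simpa [Matrix.vecMulVec_apply, Function.comp_def, hPdef, prodFun] using this
  -- bounds on d
  have e0 : Fin n := ⟨0, hn⟩
  have hdbd : ∀ᵐ ω ∂μ, ∀ j : Fin n, ‖d ω j‖ ≤ 1 := by
    filter_upwards [hdconv, hPbd] with ω hω hbd
    intro j
    have htd : Tendsto (fun k => P k ω e0 j) atTop (nhds (d ω j)) := hω e0 j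
    have h1 : d ω j ≤ 1 := le_of_tendsto htd (Eventually.of_forall fun k =>
      (abs_le.1 ((Real.norm_eq_abs _) ▸ hbd k e0 j)).2)
    have h2 : -1 ≤ d ω j := ge_of_tendsto htd (Eventually.of_forall fun k =>
      (abs_le.1 ((Real.norm_eq_abs _) ▸ hbd k e0 j)).1)
    rw [Real.norm_eq_abs, abs_le]
    exact ⟨h2, h1⟩
  have hdm : ∀ j : Fin n, AEStronglyMeasurable (fun ω => d ω j) μ := by
    intro j
    refine aestronglyMeasurable_of_tendsto_ae atTop
      (fun k => (hPem k e0 j).aestronglyMeasurable) ?_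
    filter_upwards [hdconv] with ω hω using hω e0 j
  have hdint : ∀ j : Fin n, Integrable (fun ω => d ω j) μ := by
    intro j
    refine Integrable.mono' (integrable_const 1) (hdm j) ?_
    filter_upwards [hdbd] with ω hω using hω j
  have hddm : ∀ i j : Fin n, AEStronglyMeasurable (fun ω => d ω i * d ω j) μ :=
    fun i j => (hdm i).mul (hdm j)
  have hddint : ∀ i j : Fin n, Integrable (fun ω => d ω i * d ω j) μ := by
    intro i j
    refine Integrable.mono' (integrable_const 1) (hddm i j) ?_
    filter_upwards [hdbd] with ω hω
    calc ‖d ω i * d ω j‖ = ‖d ω i‖ * ‖d ω j‖ := norm_mul _ _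
      _ ≤ 1 * 1 := mul_le_mul (hω i) (hω j) (norm_nonneg _) zero_le_one
      _ = 1 := one_mul 1
  -- E[d] = v
  have hEWlim : ∀ i j : Fin n,
      Tendsto (fun k => (EW ^ k) i j) atTop (nhds (∫ ω, d ω j ∂μ)) := by
    intro i j
    have := MeasureTheory.tendsto_integral_of_dominated_convergence
      (F := fun k ω => P k ω i j) (f := fun ω => d ω j) (bound := fun _ => 1)
      (fun k => (hPem k i j).aestronglyMeasurable) (integrable_const 1)
      (fun k => by filter_upwards [hPbd] with ω hω using hω k i j)
      (by filter_upwards [hdconv] with ω hω using hω i j)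
    simpa only [hEP] using this
  have hEd : ∀ j : Fin n, ∫ ω, d ω j ∂μ = v j := by
    intro j
    have hvk : ∀ k, v ᵥ* (EW ^ k) = v := by
      intro k
      induction k with
      | zero => simp
      | succ k ih => rw [pow_succ, ← Matrix.vecMul_vecMul, ih, hv]
    have h1 : Tendsto (fun k => ∑ i, v i * (EW ^ k) i j) atTop
        (nhds (∑ i, v i * ∫ ω, d ω j ∂μ)) :=
      tendsto_finset_sum _ fun i _ => (hEWlim i j).const_mul (v i)
    have h2 : (fun k => ∑ i, v i * (EW ^ k) i j) = fun _ => v j := by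
      funext k
      have := congrFun (hvk k) j
      simpa [Matrix.vecMul, dotProduct] using this
    rw [h2] at h1
    have h3 : (∑ i, v i * ∫ ω, d ω j ∂μ) = ∫ ω, d ω j ∂μ := by
      rw [← Finset.sum_mul, hv1, one_mul]
    rw [h3] at h1
    exact (tendsto_nhds_unique tendsto_const_nhds h1).symm
  -- E[d ⊗ d] = vR
  have hERlim : ∀ p q : Fin n × Fin n,
      Tendsto (fun k => (ER ^ k) p q) atTop
        (nhds (∫ ω, d ω q.1 * d ω q.2 ∂μ)) := by
    intro p q
    have h := MeasureTheory.tendsto_integral_of_dominated_convergence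
      (F := fun k ω => P k ω p.1 q.1 * P k ω p.2 q.2)
      (f := fun ω => d ω q.1 * d ω q.2) (bound := fun _ => 1)
      (fun k => ((hPem k p.1 q.1).mul (hPem k p.2 q.2)).aestronglyMeasurable)
      (integrable_const 1)
      (fun k => by
        filter_upwards [hPbd] with ω hω
        calc ‖P k ω p.1 q.1 * P k ω p.2 q.2‖
            = ‖P k ω p.1 q.1‖ * ‖P k ω p.2 q.2‖ := norm_mul _ _
          _ ≤ 1 * 1 := mul_le_mul (hω k p.1 q.1) (hω k p.2 q.2) (norm_nonneg _) zero_le_one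
          _ = 1 := one_mul 1)
      (by
        filter_upwards [hdconv] with ω hω
        exact (hω p.1 q.1).mul (hω p.2 q.2))
    have heq : (fun k => ∫ ω, P k ω p.1 q.1 * P k ω p.2 q.2 ∂μ)
        = fun k => (ER ^ k) p q := by
      funext k
      exact hEP2 k p q
    rwa [heq] at h
  have hEd2 : ∀ q : Fin n × Fin n, ∫ ω, d ω q.1 * d ω q.2 ∂μ = vR q := by
    intro q
    have hvk : ∀ k, vR ᵥ* (ER ^ k) = vR := by
      intro k
      induction k with
      | zero => simp
      | succ k ih => rw [pow_succ, ← Matrix.vecMul_vecMul, ih, hvR]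
    have h1 : Tendsto (fun k => ∑ p, vR p * (ER ^ k) p q) atTop
        (nhds (∑ p : Fin n × Fin n, vR p * ∫ ω, d ω q.1 * d ω q.2 ∂μ)) :=
      tendsto_finset_sum _ fun p _ => (hERlim p q).const_mul (vR p)
    have h2 : (fun k => ∑ p, vR p * (ER ^ k) p q) = fun _ => vR q := by
      funext k
      have := congrFun (hvk k) q
      simpa [Matrix.vecMul, dotProduct] using this
    rw [h2] at h1
    have h3 : (∑ p : Fin n × Fin n, vR p * ∫ ω, d ω q.1 * d ω q.2 ∂μ)
        = ∫ ω, d ω q.1 * d ω q.2 ∂μ := by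
      rw [← Finset.sum_mul, hvR1, one_mul]
    rw [h3] at h1
    exact (tendsto_nhds_unique tendsto_const_nhds h1).symm
  -- final variance computation
  set f : Ω → ℝ := fun ω => ∑ i, d ω i * x0 i with hfdef
  have hfm : AEStronglyMeasurable f μ :=
    Finset.aestronglyMeasurable_fun_sum _ fun i _ => (hdm i).mul_const (x0 i)
  have hfL2 : MemLp f 2 μ := by
    refine MemLp.of_bound hfm (∑ i, |x0 i|) ?_
    filter_upwards [hdbd] with ω hω
    calc ‖f ω‖ ≤ ∑ i, ‖d ω i * x0 i‖ := norm_sum_le _ _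
      _ ≤ ∑ i, |x0 i| := by
          refine Finset.sum_le_sum fun i _ => ?_
          rw [norm_mul]
          calc ‖d ω i‖ * ‖x0 i‖ ≤ 1 * ‖x0 i‖ :=
                mul_le_mul_of_nonneg_right (hω i) (norm_nonneg _)
            _ = |x0 i| := by rw [one_mul, Real.norm_eq_abs]
  rw [variance_eq_sub hfL2]
  have hEf : ∫ ω, f ω ∂μ = ∑ i, x0 i * v i := by
    rw [hfdef]
    rw [integral_finset_sum _ fun i _ => (hdint i).mul_const (x0 i)]
    refine Finset.sum_congr rfl fun i _ => ?_
    rw [integral_mul_const, hEd i, mul_comm]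
  have hEf2 : ∫ ω, f ω ^ 2 ∂μ = ∑ p : Fin n × Fin n, x0 p.1 * x0 p.2 * vR p := by
    have hexp : ∀ ω, f ω ^ 2 = ∑ p : Fin n × Fin n,
        (d ω p.1 * d ω p.2) * (x0 p.1 * x0 p.2) := by
      intro ω
      rw [hfdef, sq, Finset.sum_mul_sum, ← Finset.univ_product_univ, Finset.sum_product]
      exact Finset.sum_congr rfl fun i _ => Finset.sum_congr rfl fun j _ => by ring
    simp only [hexp]
    rw [integral_finset_sum _ fun p _ => (hddint p.1 p.2).mul_const (x0 p.1 * x0 p.2)]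
    refine Finset.sum_congr rfl fun p _ => ?_
    rw [integral_mul_const, hEd2 p]
    ring
  simp only [Pi.pow_apply]
  rw [hEf2, hEf]
end

section
/- Let a, b ∈ {0,1} be independent Bernoulli(p) random variables, Y ~ Binomial(d-2, p) independent of (a,b), d ≥ 2, and set X = a + b + Y. Then E[ab/(X+1)²] = (1 + 2M⁽²⁾ - 3M⁽¹⁾)/(d(d-1)), where M⁽¹⁾ = E[1/(X+1)] and M⁽²⁾ = E[1/(X+1)²] for X ~ Binomial(d,p). -/
lemma choose_shift (n k : ℕ) :
    (n+2)*(n+1) * n.choose k = (k+2)*(k+1) * (n+2).choose (k+2) := by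
  have h1 := Nat.add_one_mul_choose_eq n k
  have h2 := Nat.add_one_mul_choose_eq (n+1) (k+1)
  calc (n+2)*(n+1) * n.choose k = (n+2) * ((n+1) * n.choose k) := by ring
    _ = (n+2) * ((n+1).choose (k+1) * (k+1)) := by rw [h1]
    _ = ((n+1+1) * (n+1).choose (k+1)) * (k+1) := by ring
    _ = ((n+2).choose (k+2) * (k+2)) * (k+1) := by rw [h2]
    _ = (k+2)*(k+1) * (n+2).choose (k+2) := by ring

/-- For independent `a, b ~ Bernoulli(p)` and `Y ~ Binomial(d-2,p)` independent of `(a,b)`,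
with `X = a + b + Y ~ Binomial(d,p)` and `d ≥ 2`,
`E[ab/(X+1)²] = (1 + 2M⁽²⁾ - 3M⁽¹⁾)/(d(d-1))`, where `M⁽¹⁾ = E[1/(X+1)]` and
`M⁽²⁾ = E[1/(X+1)²]` for `X ~ Binomial(d,p)`. -/
theorem bernoulli_pair_binomial_expectation
    (d : ℕ) (hd : 2 ≤ d) (p q M1 M2 : ℝ) (hp0 : 0 < p) (hp1 : p < 1) (hq : q = 1 - p)
    (hM1 : M1 = ∑ k ∈ Finset.range (d + 1),
        (1 / ((k : ℝ) + 1)) * (d.choose k : ℝ) * p ^ k * q ^ (d - k))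
    (hM2 : M2 = ∑ k ∈ Finset.range (d + 1),
        (1 / ((k : ℝ) + 1) ^ 2) * (d.choose k : ℝ) * p ^ k * q ^ (d - k)) :
    ∑ a ∈ Finset.range 2, ∑ b ∈ Finset.range 2, ∑ k ∈ Finset.range (d - 1),
        (((a : ℝ) * (b : ℝ)) / ((a : ℝ) + (b : ℝ) + (k : ℝ) + 1) ^ 2) *
          (p ^ a * q ^ (1 - a)) * (p ^ b * q ^ (1 - b)) *
          (((d - 2).choose k : ℝ) * p ^ k * q ^ (d - 2 - k))
      = (1 + 2 * M2 - 3 * M1) / ((d : ℝ) * ((d : ℝ) - 1)) := by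
  obtain ⟨n, rfl⟩ : ∃ n, d = n + 2 := ⟨d - 2, by omega⟩
  clear hd
  have hpq : p + q = 1 := by rw [hq]; ring
  set f : ℕ → ℝ := fun j => ((j:ℝ) * ((j:ℝ) - 1) / ((j:ℝ) + 1) ^ 2) *
      ((n+2).choose j : ℝ) * p ^ j * q ^ (n + 2 - j) with hf
  have hone : ∑ j ∈ Finset.range (n+3),
      ((n+2).choose j : ℝ) * p ^ j * q ^ (n+2-j) = 1 := by
    have h := add_pow p q (n+2)
    rw [hpq, one_pow] at h
    rw [show (n+3) = (n+2)+1 from rfl]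
    rw [h]
    exact Finset.sum_congr rfl fun j _ => by ring
  have hkey : ∑ j ∈ Finset.range (n+3), f j = 1 - 3*M1 + 2*M2 := by
    have hterm : ∀ j ∈ Finset.range (n+3), f j =
        (((n+2).choose j : ℝ) * p ^ j * q ^ (n+2-j))
        - 3 * ((1/((j:ℝ)+1)) * ((n+2).choose j : ℝ) * p ^ j * q ^ (n+2-j))
        + 2 * ((1/((j:ℝ)+1)^2) * ((n+2).choose j : ℝ) * p ^ j * q ^ (n+2-j)) := by
      intro j _
      have hj : ((j:ℝ)+1) ≠ 0 := by positivity
      simp only [hf]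
      field_simp
      ring
    rw [Finset.sum_congr rfl hterm]
    rw [Finset.sum_add_distrib, Finset.sum_sub_distrib, ← Finset.mul_sum, ← Finset.mul_sum,
      hone, hM1, hM2]
  have hshift : ∑ j ∈ Finset.range (n+3), f j = ∑ k ∈ Finset.range (n+1), f (k+2) := by
    rw [show (n+3) = (n+1)+1+1 from rfl, Finset.sum_range_succ' f,
      Finset.sum_range_succ' (fun k => f (k+1))]
    have h0 : f 0 = 0 := by simp [hf]
    have h1 : f 1 = 0 := by simp [hf]
    rw [h0, h1, add_zero, add_zero]
  have hD : ((n:ℝ)+2) * ((n:ℝ)+1) ≠ 0 := by positivity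
  have hM : (1 + 2*M2 - 3*M1) = ∑ k ∈ Finset.range (n+1), f (k+2) := by
    rw [← hshift, hkey]; ring
  -- simplify a,b sums
  simp only [Finset.sum_range_succ, Finset.sum_range_zero, Nat.cast_zero, Nat.cast_one,
    zero_mul, mul_zero, one_mul, zero_div, zero_add, zero_mul, Finset.sum_const_zero,
    add_zero, pow_zero, pow_one, mul_one, Nat.add_sub_cancel]
  push_cast
  rw [hM, show ((n:ℝ)+2) - 1 = (n:ℝ)+1 by ring, Finset.sum_div]
  refine Finset.sum_congr rfl fun k hk => ?_
  have hc : ((n:ℝ)+2)*((n:ℝ)+1) * (n.choose k : ℝ)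
      = ((k:ℝ)+2)*((k:ℝ)+1)*((n+2).choose (k+2) : ℝ) := by
    exact_mod_cast congrArg (Nat.cast (R := ℝ)) (choose_shift n k)
  have hsub : n + 2 - (k + 2) = n - k := by omega
  simp only [hf, hsub]
  push_cast
  have hcc : (((n+2).choose (k+2) : ℕ) : ℝ)
      = ((n:ℝ)+2)*((n:ℝ)+1)*(n.choose k:ℝ) / (((k:ℝ)+2)*((k:ℝ)+1)) := by
    field_simp
    linarith [hc]
  rw [hcc]
  have hk3 : ((k:ℝ)+3) ≠ 0 := by positivity
  field_simp
  ring
end
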